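/- arXiv:2504.09505 — 7 statements merged into one kernel-verified Lean document; each statement's English description precedes it below -/
import Mathlib

section
/- Let R be a commutative noetherian local ring with residue field k, and let M be a finitely generated R-module with decomposition M ≅ X ⊕ R^a where X is stable. Then the dimension over k of the space of R-linear maps M → k that factor through a finitely generated free module equals a. -/
noncomputable section

/-- A linear map factors through a finitely generated free module
(equivalently, through a projective module, for maps between finitely
generated modules). -/
def FactorsThruFree (R : Type) [Ring R] {M N : Type} [AddCommGroup M] [Module R M]
    [AddCommGroup N] [Module R N] (f : M →ₗ[R] N) : Prop :=
  ∃ (b : ℕ) (g : (Fin b → R) →ₗ[R] N) (h : M →ₗ[R] (Fin b → R)), f = g ∘ₗ h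

/-- `M` is stable: it has no nonzero free direct summand.  (Over any ring, a f.g. module
has a nonzero free direct summand iff it admits a surjective linear map onto `R`.) -/
def IsStable (R : Type) [Ring R] (M : Type) [AddCommGroup M] [Module R M] : Prop :=
  ∀ p : M →ₗ[R] R, ¬ Function.Surjective p

/-- If `M ≅ X ⊕ R^a` with `X` stable, then the dimension over the residue field `k` of the
space of linear maps `M → k` factoring through a finitely generated free module equals `a`. -/
theorem stmt_1 (R : Type) [CommRing R] [IsNoetherianRing R] [IsLocalRing R]
    (M X : Type) [AddCommGroup M] [Module R M] [Module.Finite R M]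
    [AddCommGroup X] [Module R X] [Module.Finite R X]
    (a : ℕ) (hX : IsStable R X) (e : Nonempty (M ≃ₗ[R] X × (Fin a → R))) :
    Module.finrank (IsLocalRing.ResidueField R)
      (Submodule.span (IsLocalRing.ResidueField R)
        {f : M →ₗ[R] IsLocalRing.ResidueField R | FactorsThruFree R f}) = a := by
  obtain ⟨e⟩ := e
  classical
  set k := IsLocalRing.ResidueField R with hk
  -- residue as linear map
  let ε : R →ₗ[R] k := Algebra.linearMap R k
  have hε : ∀ r : R, ε r = IsLocalRing.residue R r := fun r => rfl
  -- r • x = residue r * x in k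
  have hsmul : ∀ (r : R) (x : k), r • x = IsLocalRing.residue R r * x := by
    intro r x
    rw [Algebra.smul_def]; rfl
  have hmem0 : ∀ (r : R) (x : k), r ∈ IsLocalRing.maximalIdeal R → r • x = 0 := by
    intro r x hr
    rw [hsmul,
      show IsLocalRing.residue R r = Ideal.Quotient.mk (IsLocalRing.maximalIdeal R) r from rfl,
      Ideal.Quotient.eq_zero_iff_mem.mpr hr]; exact zero_mul _
  -- the basis maps
  let f : Fin a → (M →ₗ[R] k) := fun i =>
    ε ∘ₗ (LinearMap.proj i) ∘ₗ (LinearMap.snd R X (Fin a → R)) ∘ₗ (e : M →ₗ[R] X × (Fin a → R))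
  have hf : ∀ i x, f i x = IsLocalRing.residue R ((e x).2 i) := fun i x => rfl
  let φ : (Fin a → k) →ₗ[k] (M →ₗ[R] k) := Fintype.linearCombination k f
  have hφ : ∀ c, φ c = ∑ i, c i • f i := fun c => Fintype.linearCombination_apply k f c
  -- each f i is in the set
  have hfset : ∀ i, FactorsThruFree R (f i) := by
    intro i
    exact ⟨a, ε ∘ₗ LinearMap.proj i,
      (LinearMap.snd R X (Fin a → R)) ∘ₗ (e : M →ₗ[R] X × (Fin a → R)), rfl⟩
  -- special elements
  let u : Fin a → M := fun j => e.symm (0, Pi.single j 1)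
  have hfu : ∀ i j, f i (u j) = if i = j then 1 else 0 := by
    intro i j
    rw [hf]
    simp only [u, LinearEquiv.apply_symm_apply]
    rw [Pi.single_apply]
    split <;> simp
  -- injectivity
  have hinj : Function.Injective φ := by
    rw [injective_iff_map_eq_zero]
    intro c hc
    funext j
    have h1 := congrArg (fun (g : M →ₗ[R] k) => g (u j)) hc
    simp only [hφ, LinearMap.sum_apply, LinearMap.smul_apply, LinearMap.zero_apply] at h1
    simp only [hfu] at h1
    rw [Finset.sum_eq_single j] at h1
    · simpa using h1
    · intro b _ hb
      simp [hb]
    · simp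
  -- decomposing elements
  have hv1 : ∀ {b : ℕ} (v : Fin b → R), v = ∑ j, v j • (Pi.single j (1 : R) : Fin b → R) := by
    intro b v
    funext j
    simp [Pi.single_apply, Finset.sum_apply]
  have hu2 : ∀ r : Fin a → R, e.symm (0, r) = ∑ i, r i • u i := by
    intro r
    apply e.injective
    rw [LinearEquiv.apply_symm_apply, map_sum]
    simp only [map_smul, u, LinearEquiv.apply_symm_apply]
    refine Prod.ext ?_ ?_
    · simp [Prod.fst_sum]
    · rw [Prod.snd_sum]
      simpa using (hv1 r)
  -- g kills vectors with entries in the maximal ideal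
  have hg0 : ∀ (b : ℕ) (g : (Fin b → R) →ₗ[R] k) (v : Fin b → R),
      (∀ j, v j ∈ IsLocalRing.maximalIdeal R) → g v = 0 := by
    intro b g v hv
    rw [hv1 v, map_sum]
    simp only [map_smul]
    exact Finset.sum_eq_zero fun j _ => hmem0 _ _ (hv j)
  -- set ⊆ range φ
  have hsub : {f0 : M →ₗ[R] k | FactorsThruFree R f0} ⊆ ↑(LinearMap.range φ) := by
    rintro f0 ⟨b, g, h, rfl⟩
    refine ⟨fun i => (g ∘ₗ h) (u i), ?_⟩
    ext x
    rw [hφ]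
    have hx : x = e.symm ((e x).1, 0) + ∑ i, (e x).2 i • u i := by
      rw [← hu2, ← map_add]
      simp
    -- the stable part is killed
    have hzero : (g ∘ₗ h) (e.symm ((e x).1, 0)) = 0 := by
      have hrange : ∀ j : Fin b,
          h (e.symm ((e x).1, 0)) j ∈ IsLocalRing.maximalIdeal R := by
        intro j
        set p : X →ₗ[R] R :=
          (LinearMap.proj j) ∘ₗ h ∘ₗ ((e.symm : X × (Fin a → R) →ₗ[R] M) ∘ₗ
            LinearMap.inl R X (Fin a → R)) with hp
        have hps : ¬ Function.Surjective p := hX p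
        have hne : LinearMap.range p ≠ ⊤ := by
          rwa [Ne, LinearMap.range_eq_top]
        have hle : LinearMap.range p ≤ IsLocalRing.maximalIdeal R :=
          IsLocalRing.le_maximalIdeal hne
        have : p ((e x).1) = h (e.symm ((e x).1, 0)) j := rfl
        rw [← this]
        exact hle ⟨(e x).1, rfl⟩
      exact hg0 b g _ hrange
    conv_rhs => rw [hx]
    rw [map_add, hzero, zero_add, map_sum]
    simp only [map_smul, LinearMap.sum_apply, LinearMap.smul_apply]
    refine Finset.sum_congr rfl fun i _ => ?_
    rw [hsmul, hf, smul_eq_mul, mul_comm]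
  -- span = range φ
  have hspan : Submodule.span k {f0 : M →ₗ[R] k | FactorsThruFree R f0} = LinearMap.range φ := by
    apply le_antisymm
    · rw [Submodule.span_le]; exact hsub
    · rintro _ ⟨c, rfl⟩
      rw [hφ]
      exact Submodule.sum_mem _ fun i _ =>
        Submodule.smul_mem _ _ (Submodule.subset_span (hfset i))
  rw [hspan, LinearMap.finrank_range_of_inj hinj, Module.finrank_fin_fun]
end
end

section
/- Let Λ be a noetherian ring, n ≥ 1 an integer, Y a finitely generated Λ-module of projective dimension at most n−1, and X' a finitely generated Λ-module with Ext^i_Λ(X', Λ) = 0 for all 1 ≤ i ≤ n. Then Ext^1_Λ(X', Y) = 0. -/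
noncomputable section

/-- Projective dimension at most `n`. -/
def projDimLE (R : Type) [Ring R] :
    ℕ → (M : Type) → [AddCommGroup M] → [Module R M] → Prop
  | 0, M, _, _ => Module.Projective R M
  | n + 1, M, _, _ => ∃ (b : ℕ) (p : (Fin b → R) →ₗ[R] M),
      Function.Surjective p ∧ projDimLE R n (LinearMap.ker p)

open CategoryTheory in
/-- The Ext group `Ext^i_Λ(X, Y)` (as a `ℤ`-module). -/
def extGrp (Λ : Type) [Ring Λ] (i : ℕ) (X Y : Type) [AddCommGroup X] [Module Λ X]
    [AddCommGroup Y] [Module Λ Y] : ModuleCat ℤ :=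
  ((Ext ℤ (ModuleCat.{0} Λ) i).obj (Opposite.op (ModuleCat.of Λ X))).obj (ModuleCat.of Λ Y)

namespace StmtTwoAux

open CategoryTheory Limits

variable {Λ : Type} [Ring Λ] {X : ModuleCat.{0} Λ} (P : ProjectiveResolution X)

/-- The functor `Y ↦ Hom(P_•, Y)` (a cochain complex of `ℤ`-modules). -/
def homF : ModuleCat.{0} Λ ⥤ CochainComplex (ModuleCat ℤ) ℕ where
  obj Y := P.complex.linearYonedaObj ℤ Y
  map f := {
    f := fun i => ((linearYoneda ℤ (ModuleCat Λ)).map f).app (Opposite.op (P.complex.X i))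
    comm' := by intro i j hij; ext x; simp [ChainComplex.linearYonedaObj]; rfl }
  map_id := by intro Y; ext i x : 3; simp [ChainComplex.linearYonedaObj]; rfl
  map_comp := by intro Y Z W f g; ext i x : 3; simp [ChainComplex.linearYonedaObj]; rfl

instance : (homF P).Additive := by
  constructor
  intro Y Z f g
  ext i x : 3
  simp [homF]
  rfl

lemma isZero_mid {C : Type*} [Category C] [Abelian C] {S : ShortComplex C}
    (h : S.Exact) (h1 : IsZero S.X₁) (h3 : IsZero S.X₃) : IsZero S.X₂ := by
  have hf : S.f = 0 := h1.eq_of_src _ _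
  have := h.mono_g hf
  exact IsZero.of_mono S.g h3

lemma subsingleton_of_isZero {M : ModuleCat ℤ} (h : IsZero M) : Subsingleton M := by
  constructor
  intro a b
  have h1 : (𝟙 M : M ⟶ M) = 0 := h.eq_of_src _ _
  calc a = (𝟙 M : M ⟶ M) a := rfl
    _ = (0 : M ⟶ M) a := by rw [h1]
    _ = (𝟙 M : M ⟶ M) b := by rw [h1]; rfl
    _ = b := rfl

lemma isZero_homology_of_isZero {K : CochainComplex (ModuleCat ℤ) ℕ} (j : ℕ)
    (h : IsZero (K.X j)) : IsZero (K.homology j) :=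
  IsZero.of_epi (K.homologyπ j) (IsZero.of_mono (K.iCycles j) h)

lemma homF_shortExact {S : ShortComplex (ModuleCat.{0} Λ)} (hS : S.ShortExact) :
    (S.map (homF P)).ShortExact := by
  apply HomologicalComplex.shortExact_of_degreewise_shortExact
  intro i
  have hmono := hS.mono_f
  have hepi := hS.epi_g
  refine ShortComplex.ShortExact.mk' ?_ ?_ ?_
  · rw [ShortComplex.moduleCat_exact_iff]
    intro (x : P.complex.X i ⟶ S.X₂) hx
    have hx' : x ≫ S.g = 0 := hx
    exact ⟨hS.exact.lift x hx', hS.exact.lift_f x hx'⟩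
  · rw [ModuleCat.mono_iff_injective]
    intro (a : P.complex.X i ⟶ S.X₁) (b : P.complex.X i ⟶ S.X₁) hab
    have : a ≫ S.f = b ≫ S.f := hab
    exact (cancel_mono S.f).mp this
  · rw [ModuleCat.epi_iff_surjective]
    intro (y : P.complex.X i ⟶ S.X₃)
    exact ⟨Projective.factorThru y S.g, Projective.factorThru_comp y S.g⟩

lemma isZero_homF_of_subsingleton (Y : ModuleCat.{0} Λ) (hY : Subsingleton Y) (j : ℕ) :
    IsZero (((homF P).obj Y).homology j) := by
  apply isZero_homology_of_isZero
  have : Subsingleton (P.complex.X j ⟶ Y) := ⟨fun a b => by ext x; exact Subsingleton.elim _ _⟩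
  exact @ModuleCat.isZero_of_subsingleton ℤ _ (ModuleCat.of ℤ (P.complex.X j ⟶ Y)) this

lemma isZero_homF_free (n : ℕ)
    (hΛ : ∀ i, 1 ≤ i → i ≤ n → IsZero (((homF P).obj (ModuleCat.of Λ Λ)).homology i)) :
    ∀ (b j : ℕ), 1 ≤ j → j ≤ n →
      IsZero (((homF P).obj (ModuleCat.of Λ (Fin b → Λ))).homology j) := by
  intro b
  induction b with
  | zero =>
    intro j h1 h2
    exact isZero_homF_of_subsingleton P _ (by infer_instance) j
  | succ b ih =>
    intro j h1 h2
    -- SES 0 → Λ → Λ^{b+1} → Λ^b → 0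
    let f : ModuleCat.of Λ Λ ⟶ ModuleCat.of Λ (Fin (b+1) → Λ) :=
      ModuleCat.ofHom (LinearMap.single Λ (fun _ => Λ) 0)
    let g : ModuleCat.of Λ (Fin (b+1) → Λ) ⟶ ModuleCat.of Λ (Fin b → Λ) :=
      ModuleCat.ofHom (LinearMap.funLeft Λ Λ Fin.succ)
    have hfg : f ≫ g = 0 := by
      apply ModuleCat.hom_ext; refine LinearMap.ext fun x => ?_
      funext k
      show (Pi.single (0 : Fin (b+1)) x : Fin (b+1) → Λ) k.succ = 0
      exact Pi.single_eq_of_ne (Fin.succ_ne_zero k) x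
    let S : ShortComplex (ModuleCat.{0} Λ) := ShortComplex.mk f g hfg
    have hSE : S.ShortExact := by
      refine ShortComplex.ShortExact.mk' ?_ ?_ ?_
      · rw [ShortComplex.moduleCat_exact_iff]
        intro (v : Fin (b+1) → Λ) hv
        refine ⟨v 0, ?_⟩
        funext k
        show (Pi.single (M := fun _ : Fin (b+1) => Λ) 0 (v 0)) k = v k
        refine Fin.cases ?_ ?_ k
        · exact Pi.single_eq_same (M := fun _ : Fin (b+1) => Λ) 0 (v 0)
        · intro k'
          have h0 : v k'.succ = 0 := congrFun hv k'
          rw [Pi.single_eq_of_ne (Fin.succ_ne_zero k'), h0]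
      · rw [ModuleCat.mono_iff_injective]
        intro y z hyz
        have h' : (Pi.single (0 : Fin (b+1)) y : Fin (b+1) → Λ) 0
            = (Pi.single (0 : Fin (b+1)) z : Fin (b+1) → Λ) 0 := congrFun hyz 0
        simpa using h'
      · rw [ModuleCat.epi_iff_surjective]
        intro v
        exact ⟨Fin.cons 0 v, rfl⟩
    have hmapped := homF_shortExact P hSE
    have hex := hmapped.homology_exact₂ j
    exact isZero_mid hex (hΛ j h1 h2) (ih j h1 h2)

lemma main_induction [IsNoetherianRing Λ] (n : ℕ)
    (hΛ : ∀ i, 1 ≤ i → i ≤ n → IsZero (((homF P).obj (ModuleCat.of Λ Λ)).homology i)) :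
    ∀ (m : ℕ) (j : ℕ), 1 ≤ j → m + j ≤ n →
      ∀ (Y : Type) (_ : AddCommGroup Y) (_ : Module Λ Y) (_ : Module.Finite Λ Y),
        projDimLE Λ m Y → IsZero (((homF P).obj (ModuleCat.of Λ Y)).homology j) := by
  intro m
  induction m with
  | zero =>
    intro j h1 h2 Y _ _ _ hpd
    have hproj : Module.Projective Λ Y := hpd
    obtain ⟨b, q, hq⟩ := Module.Finite.exists_fin' Λ Y
    obtain ⟨s, hs⟩ := Module.projective_lifting_property q LinearMap.id hq
    let qh : ModuleCat.of Λ (Fin b → Λ) ⟶ ModuleCat.of Λ Y := ModuleCat.ofHom q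
    let sh : ModuleCat.of Λ Y ⟶ ModuleCat.of Λ (Fin b → Λ) := ModuleCat.ofHom s
    have hsq : sh ≫ qh = 𝟙 _ := by ext x; exact LinearMap.congr_fun hs x
    have h2' : HomologicalComplex.homologyMap ((homF P).map sh) j ≫
        HomologicalComplex.homologyMap ((homF P).map qh) j = 𝟙 _ := by
      rw [← HomologicalComplex.homologyMap_comp, ← Functor.map_comp, hsq,
        CategoryTheory.Functor.map_id, HomologicalComplex.homologyMap_id]
    rw [IsZero.iff_id_eq_zero, ← h2']
    have hfree := isZero_homF_free P n hΛ b j h1 (by omega)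
    rw [hfree.eq_of_tgt (HomologicalComplex.homologyMap ((homF P).map sh) j) 0, zero_comp]
  | succ m ih =>
    intro j h1 h2 Y _ _ _ hpd
    obtain ⟨b, p, hp, hker⟩ := hpd
    have hfin : Module.Finite Λ (LinearMap.ker p) :=
      Module.Finite.iff_fg.mpr (IsNoetherian.noetherian _)
    let f : ModuleCat.of Λ (LinearMap.ker p) ⟶ ModuleCat.of Λ (Fin b → Λ) :=
      ModuleCat.ofHom (LinearMap.ker p).subtype
    let g : ModuleCat.of Λ (Fin b → Λ) ⟶ ModuleCat.of Λ Y := ModuleCat.ofHom p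
    have hfg : f ≫ g = 0 := by ext x; exact x.2
    let S : ShortComplex (ModuleCat.{0} Λ) := ShortComplex.mk f g hfg
    have hSE : S.ShortExact := by
      refine ShortComplex.ShortExact.mk' ?_ ?_ ?_
      · rw [ShortComplex.moduleCat_exact_iff]
        intro v hv
        exact ⟨⟨v, hv⟩, rfl⟩
      · rw [ModuleCat.mono_iff_injective]; exact Subtype.val_injective
      · rw [ModuleCat.epi_iff_surjective]; exact hp
    have hmapped := homF_shortExact P hSE
    have hrel : (ComplexShape.up ℕ).Rel j (j+1) := rfl
    have hex := hmapped.homology_exact₃ j (j+1) hrel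
    refine isZero_mid hex ?_ ?_
    · exact isZero_homF_free P n hΛ b j h1 (by omega)
    · exact ih (j+1) (by omega) (by omega) (LinearMap.ker p) _ _ hfin hker

end StmtTwoAux

/-- If `pd_Λ Y ≤ n - 1` and `Ext^i_Λ(X', Λ) = 0` for `1 ≤ i ≤ n`, then `Ext^1_Λ(X', Y) = 0`. -/
theorem stmt_2 (Λ : Type) [Ring Λ] [IsNoetherianRing Λ] (n : ℕ) (hn : 1 ≤ n)
    (Y X' : Type) [AddCommGroup Y] [Module Λ Y] [Module.Finite Λ Y]
    [AddCommGroup X'] [Module Λ X'] [Module.Finite Λ X']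
    (hY : projDimLE Λ (n - 1) Y)
    (hX' : ∀ i, 1 ≤ i → i ≤ n → Subsingleton (extGrp Λ i X' Λ)) :
    Subsingleton (extGrp Λ 1 X' Y) := by
  classical
  obtain ⟨P⟩ := (CategoryTheory.HasProjectiveResolution.out (Z := ModuleCat.of Λ X'))
  have hΛ : ∀ i, 1 ≤ i → i ≤ n →
      CategoryTheory.Limits.IsZero (((StmtTwoAux.homF P).obj (ModuleCat.of Λ Λ)).homology i) := by
    intro i hi1 hi2
    have hsub := hX' i hi1 hi2
    have hz : CategoryTheory.Limits.IsZero (extGrp Λ i X' Λ) :=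
      @ModuleCat.isZero_of_subsingleton ℤ _ (extGrp Λ i X' Λ) hsub
    exact CategoryTheory.Limits.IsZero.of_iso hz (P.isoExt i (ModuleCat.of Λ Λ)).symm
  have hmain := StmtTwoAux.main_induction P n hΛ (n - 1) 1 le_rfl (by omega) Y ‹_› ‹_› ‹_› hY
  exact StmtTwoAux.subsingleton_of_isZero
    (CategoryTheory.Limits.IsZero.of_iso hmain (P.isoExt 1 (ModuleCat.of Λ Y)))
end
end

section
/- Let Λ be a noetherian ring and let 0 → Y → X → M → 0 be a short exact sequence of finitely generated Λ-modules with pd_Λ Y ≤ n−1 and Ext^i_Λ(X,Λ) = 0 for 1 ≤ i ≤ n. Then for every finitely generated Λ-module X' with Ext^i_Λ(X',Λ) = 0 for 1 ≤ i ≤ n, every homomorphism X' → M lifts through X → M. -/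
noncomputable section

namespace StmtAux

open CategoryTheory

variable {Λ : Type} [Ring Λ] {X' : ModuleCat.{0} Λ} (P : ProjectiveResolution X')

/-- vanishing of H^{j+1}(Hom(P, Y)) stated concretely -/
def Vanish (j : ℕ) (Y : ModuleCat.{0} Λ) : Prop :=
  ∀ φ : P.complex.X (j+1) ⟶ Y, P.complex.d (j+2) (j+1) ≫ φ = 0 →
    ∃ μ : P.complex.X j ⟶ Y, P.complex.d (j+1) j ≫ μ = φ

lemma vanish_of_subsingleton (j : ℕ) (Y : ModuleCat.{0} Λ)
    (h : Subsingleton (((Ext ℤ (ModuleCat.{0} Λ) (j+1)).obj (Opposite.op X')).obj Y)) :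
    Vanish P j Y := by
  set K := P.complex.linearYonedaObj ℤ Y with hK
  have e := P.isoExt (R := ℤ) (j+1) Y
  haveI : Subsingleton ((forget (ModuleCat ℤ)).obj
      (((Ext ℤ (ModuleCat.{0} Λ) (j+1)).obj (Opposite.op X')).obj Y)) := h
  have hsub : Subsingleton (K.homology (j+1)) :=
    ((forget (ModuleCat ℤ)).mapIso e).toEquiv.symm.subsingleton
  have hz : Limits.IsZero (K.homology (j+1)) := ModuleCat.isZero_of_subsingleton _
  have hex : K.ExactAt (j+1) := (K.exactAt_iff_isZero_homology _).2 hz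
  rw [K.exactAt_iff' j (j+1) (j+2) (by simp) (by simp),
    ShortComplex.moduleCat_exact_iff] at hex
  intro φ hφ
  obtain ⟨μ, hμ⟩ := hex φ (by
    show (Linear.leftComp ℤ Y (P.complex.d (j+2) (j+1))) φ = 0
    simpa using hφ)
  exact ⟨μ, hμ⟩


-- morphisms in `ModuleCat` are literally linear maps in this mathlib version
lemma vanish_pi (j b : ℕ) (h : Vanish P j (ModuleCat.of Λ Λ)) :
    Vanish P j (ModuleCat.of Λ (Fin b → Λ)) := by
  intro φ hφ
  have comp : ∀ (k : Fin b),
      ∃ μ : P.complex.X j ⟶ ModuleCat.of Λ Λ,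
        P.complex.d (j+1) j ≫ μ
          = ModuleCat.ofHom ((LinearMap.proj k : (Fin b → Λ) →ₗ[Λ] Λ) ∘ₗ φ.hom) := by
    intro k
    refine h (ModuleCat.ofHom ((LinearMap.proj k : (Fin b → Λ) →ₗ[Λ] Λ) ∘ₗ φ.hom)) ?_
    ext x
    have := ConcreteCategory.congr_hom hφ x
    simp only [LinearMap.zero_apply] at this ⊢
    show (LinearMap.proj (R := Λ) k) (φ (P.complex.d (j+2) (j+1) x)) = 0
    have : φ (P.complex.d (j+2) (j+1) x) = 0 := this
    rw [this]
    rfl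
  choose μ hμ using comp
  refine ⟨ModuleCat.ofHom (LinearMap.pi (fun k => (μ k).hom)), ?_⟩
  ext x k
  show μ k (P.complex.d (j+1) j x) = φ x k
  exact ConcreteCategory.congr_hom (hμ k) x

lemma vanish_retract (j : ℕ) (Z : ModuleCat.{0} Λ) (Y : Type) [AddCommGroup Y] [Module Λ Y]
    (s : Y →ₗ[Λ] Z) (r : Z →ₗ[Λ] Y) (hrs : ∀ y, r (s y) = y)
    (h : Vanish P j Z) : Vanish P j (ModuleCat.of Λ Y) := by
  intro φ hφ
  obtain ⟨μ, hμ⟩ := h (ModuleCat.ofHom (s ∘ₗ φ.hom)) (by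
    ext x
    have : φ (P.complex.d (j+2) (j+1) x) = 0 := ConcreteCategory.congr_hom hφ x
    show s (φ (P.complex.d (j+2) (j+1) x)) = 0
    simp [this])
  refine ⟨ModuleCat.ofHom (r ∘ₗ μ.hom), ?_⟩
  ext x
  have : μ (P.complex.d (j+1) j x) = s (φ x) := ConcreteCategory.congr_hom hμ x
  show r (μ (P.complex.d (j+1) j x)) = φ x
  rw [this, hrs]

lemma vanish_shift (j : ℕ) (Y F : Type) [AddCommGroup Y] [Module Λ Y]
    [AddCommGroup F] [Module Λ F] (pp : F →ₗ[Λ] Y) (hsurj : Function.Surjective pp)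
    (h1 : Vanish P (j+1) (ModuleCat.of Λ (LinearMap.ker pp)))
    (h2 : Vanish P j (ModuleCat.of Λ F)) : Vanish P j (ModuleCat.of Λ Y) := by
  intro φ hφ
  -- lift φ through pp using projectivity of P.complex.X (j+1)
  haveI : Module.Projective Λ (P.complex.X (j+1)) :=
    (IsProjective.iff_projective _).mpr (by
      show Projective (ModuleCat.of Λ (P.complex.X (j+1)))
      exact P.projective (j+1))
  obtain ⟨φhat, hφhat⟩ := Module.projective_lifting_property pp φ.hom hsurj
  have hmem : ∀ x : P.complex.X (j+2),
      φhat (P.complex.d (j+2) (j+1) x) ∈ LinearMap.ker pp := by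
    intro x
    have h0 : φ (P.complex.d (j+2) (j+1) x) = 0 := ConcreteCategory.congr_hom hφ x
    have : pp (φhat (P.complex.d (j+2) (j+1) x)) = φ (P.complex.d (j+2) (j+1) x) :=
      LinearMap.congr_fun hφhat _
    simp [LinearMap.mem_ker, this, h0]
  set ψ : P.complex.X (j+2) →ₗ[Λ] LinearMap.ker pp :=
    LinearMap.codRestrict _ (φhat ∘ₗ (P.complex.d (j+2) (j+1)).hom)
      hmem with hψ
  obtain ⟨ν, hν⟩ := h1 (ModuleCat.ofHom ψ) (by
    ext x : 2
    show ψ (P.complex.d (j+3) (j+2) x) = 0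
    apply Subtype.ext
    show φhat (P.complex.d (j+2) (j+1) (P.complex.d (j+3) (j+2) x)) = 0
    have : P.complex.d (j+3) (j+2) ≫ P.complex.d (j+2) (j+1) = 0 :=
      HomologicalComplex.d_comp_d _ _ _ _
    have h0 : P.complex.d (j+2) (j+1) (P.complex.d (j+3) (j+2) x) = 0 :=
      ConcreteCategory.congr_hom this x
    simp [h0])
  -- the corrected lift is a cocycle with values in F
  let ν' : P.complex.X (j+1) →ₗ[Λ] LinearMap.ker pp := ν.hom
  have hν2 : ∀ x, ν' (P.complex.d (j+2) (j+1) x) = ψ x := fun x => by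
    have := ConcreteCategory.congr_hom hν x; exact this
  set φ2 : P.complex.X (j+1) →ₗ[Λ] F :=
    φhat - (LinearMap.ker pp).subtype ∘ₗ ν' with hφ2
  obtain ⟨μ', hμ'⟩ := h2 (ModuleCat.ofHom φ2) (by
    ext x
    show φhat (P.complex.d (j+2) (j+1) x)
      - ((ν' (P.complex.d (j+2) (j+1) x) : LinearMap.ker pp) : F) = 0
    rw [hν2 x]
    show φhat (P.complex.d (j+2) (j+1) x) - φhat (P.complex.d (j+2) (j+1) x) = 0
    simp)
  refine ⟨ModuleCat.ofHom (pp ∘ₗ μ'.hom), ?_⟩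
  ext x
  have hμ'' : μ' (P.complex.d (j+1) j x) = φ2 x := ConcreteCategory.congr_hom hμ' x
  show pp (μ' (P.complex.d (j+1) j x)) = φ x
  rw [hμ'', hφ2]
  have h1' : pp (φhat x) = φ x := LinearMap.congr_fun hφhat x
  have h2' : pp ((ν' x : F)) = 0 := (ν' x).2
  simp only [LinearMap.sub_apply, map_sub, LinearMap.comp_apply, Submodule.subtype_apply]
  rw [h1', h2', sub_zero]


lemma vanish_of_projDimLE [IsNoetherianRing Λ] {n : ℕ}
    (hfree : ∀ j : ℕ, j + 1 ≤ n → Vanish P j (ModuleCat.of Λ Λ)) :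
    ∀ (m : ℕ) (Y : Type) [AddCommGroup Y] [Module Λ Y] [Module.Finite Λ Y],
      projDimLE Λ m Y → ∀ j, j + 1 + m ≤ n → Vanish P j (ModuleCat.of Λ Y) := by
  intro m
  induction m with
  | zero =>
    intro Y _ _ _ hproj j hj
    obtain ⟨b, f, hf⟩ := Module.Finite.exists_fin' Λ Y
    haveI : Module.Projective Λ Y := hproj
    obtain ⟨s, hs⟩ := Module.projective_lifting_property f (LinearMap.id (M := Y)) hf
    exact vanish_retract P j (ModuleCat.of Λ (Fin b → Λ)) Y s f
      (fun y => LinearMap.congr_fun hs y) (vanish_pi P j b (hfree j (by omega)))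
  | succ m ih =>
    intro Y _ _ _ hproj j hj
    obtain ⟨b, pp, hsurj, hker⟩ := hproj
    haveI : Module.Finite Λ (LinearMap.ker pp) :=
      Module.Finite.iff_fg.mpr (IsNoetherian.noetherian _)
    exact vanish_shift P j Y (Fin b → Λ) pp hsurj
      (ih (LinearMap.ker pp) hker (j+1) (by omega))
      (vanish_pi P j b (hfree j (by omega)))

end StmtAux

/-- Given a short exact sequence `0 → Y → X → M → 0` with `pd Y ≤ n-1` and
`Ext^i(X,Λ) = 0` for `1 ≤ i ≤ n`, every map `X' → M` from a module `X'` with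
`Ext^i(X',Λ) = 0` for `1 ≤ i ≤ n` lifts through `X → M`. -/
theorem stmt_3 (Λ : Type) [Ring Λ] [IsNoetherianRing Λ] (n : ℕ) (hn : 1 ≤ n)
    (Y X M : Type) [AddCommGroup Y] [Module Λ Y] [Module.Finite Λ Y]
    [AddCommGroup X] [Module Λ X] [Module.Finite Λ X]
    [AddCommGroup M] [Module Λ M] [Module.Finite Λ M]
    (i : Y →ₗ[Λ] X) (p : X →ₗ[Λ] M)
    (hi : Function.Injective i) (hexact : Function.Exact i p) (hp : Function.Surjective p)
    (hY : projDimLE Λ (n - 1) Y)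
    (hX : ∀ j, 1 ≤ j → j ≤ n → Subsingleton (extGrp Λ j X Λ)) :
    ∀ (X' : Type) [AddCommGroup X'] [Module Λ X'] [Module.Finite Λ X'],
      (∀ j, 1 ≤ j → j ≤ n → Subsingleton (extGrp Λ j X' Λ)) →
      ∀ f' : X' →ₗ[Λ] M, ∃ q : X' →ₗ[Λ] X, p ∘ₗ q = f' := by
  intro X' _ _ _ hX' f'
  classical
  obtain ⟨P⟩ : Nonempty (CategoryTheory.ProjectiveResolution (ModuleCat.of Λ X')) :=
    CategoryTheory.HasProjectiveResolution.out
  have hfree : ∀ j : ℕ, j + 1 ≤ n → StmtAux.Vanish P j (ModuleCat.of Λ Λ) := fun j hj =>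
    StmtAux.vanish_of_subsingleton P j _ (hX' (j+1) (by omega) hj)
  have hvan : StmtAux.Vanish P 0 (ModuleCat.of Λ Y) :=
    StmtAux.vanish_of_projDimLE P hfree (n-1) Y hY 0 (by omega)
  -- set up the concrete lifting problem
  let F := P.complex.X 0
  let π0 : F →ₗ[Λ] X' := (P.π.f 0).hom
  have hπ0 : Function.Surjective π0 :=
    (ModuleCat.epi_iff_surjective (P.π.f 0)).1 inferInstance
  have hex0 : ∀ x : F, π0 x = 0 → ∃ y, P.complex.d 1 0 y = x := by
    intro x hx
    obtain ⟨y, hy⟩ := (CategoryTheory.ShortComplex.moduleCat_exact_iff _).1 P.exact₀ x hx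
    exact ⟨y, hy⟩
  haveI : Module.Projective Λ F :=
    (IsProjective.iff_projective _).mpr (by
      show CategoryTheory.Projective (ModuleCat.of Λ (P.complex.X 0))
      exact P.projective 0)
  obtain ⟨g, hg⟩ := Module.projective_lifting_property p (f' ∘ₗ π0) hp
  -- the obstruction cocycle with values in Y
  have hmem : ∀ x : P.complex.X 1, g (P.complex.d 1 0 x) ∈ LinearMap.range i := by
    intro x
    have h1 : π0 (P.complex.d 1 0 x) = 0 := CategoryTheory.ConcreteCategory.congr_hom P.complex_d_comp_π_f_zero x
    have h2 : p (g (P.complex.d 1 0 x)) = f' (π0 (P.complex.d 1 0 x)) :=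
      LinearMap.congr_fun hg _
    rw [h1, map_zero] at h2
    exact LinearMap.mem_range.mpr ((hexact _).mp h2)
  let eY : Y ≃ₗ[Λ] LinearMap.range i := LinearEquiv.ofInjective i hi
  let h : P.complex.X 1 →ₗ[Λ] Y :=
    eY.symm.toLinearMap ∘ₗ LinearMap.codRestrict (LinearMap.range i)
      (g ∘ₗ (P.complex.d 1 0).hom) hmem
  have hih : ∀ x : P.complex.X 1, i (h x) = g (P.complex.d 1 0 x) := by
    intro x
    show i (eY.symm ⟨g (P.complex.d 1 0 x), hmem x⟩) = g (P.complex.d 1 0 x)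
    have : ∀ z : LinearMap.range i, i (eY.symm z) = (z : X) := by
      intro z
      conv_rhs => rw [← eY.apply_symm_apply z]
      rfl
    exact this _
  obtain ⟨htilde, hhtilde⟩ := hvan (ModuleCat.ofHom h) (by
    ext x
    show h (P.complex.d 2 1 x) = 0
    apply hi
    rw [hih, map_zero]
    have hdd := P.complex.d_comp_d 2 1 0
    have h0 : P.complex.d 1 0 (P.complex.d 2 1 x) = 0 := CategoryTheory.ConcreteCategory.congr_hom hdd x
    rw [h0, map_zero])
  have hhtilde' : ∀ x : P.complex.X 1,
      htilde (P.complex.d 1 0 x) = h x := fun x => CategoryTheory.ConcreteCategory.congr_hom hhtilde x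
  -- corrected lift
  let g' : F →ₗ[Λ] X := g - i ∘ₗ htilde.hom
  have hker : ∀ x : F, π0 x = 0 → g' x = 0 := by
    intro x hx
    obtain ⟨y, hy⟩ := hex0 x hx
    show g x - i (htilde x) = 0
    rw [← hy, hhtilde' y, hih y, sub_self]
  -- descend g' along π0
  let e := π0.quotKerEquivOfSurjective hπ0
  have hker' : LinearMap.ker π0 ≤ LinearMap.ker g' := fun x hx => hker x hx
  let q : X' →ₗ[Λ] X := ((LinearMap.ker π0).liftQ g' hker') ∘ₗ e.symm.toLinearMap
  have hq : ∀ x : F, q (π0 x) = g' x := by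
    intro x
    have he : e.symm (π0 x) = Submodule.Quotient.mk x := by
      apply e.injective
      rw [e.apply_symm_apply]
      rfl
    show ((LinearMap.ker π0).liftQ g' hker') (e.symm (π0 x)) = g' x
    rw [he]
    rfl
  refine ⟨q, ?_⟩
  ext x'
  obtain ⟨x, rfl⟩ := hπ0 x'
  show p (q (π0 x)) = f' (π0 x)
  rw [hq]
  show p (g x - i (htilde x)) = f' (π0 x)
  rw [map_sub]
  have hgp : p (g x) = f' (π0 x) := LinearMap.congr_fun hg x
  have hpi : p (i (htilde x)) = 0 := (hexact _).mpr ⟨htilde x, rfl⟩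
  rw [hgp, hpi, sub_zero]
end
end

section
/- Let R be a commutative noetherian local ring with residue field k. For finitely generated R-modules M and N and n ≥ 0, define V_n(M,N) to be the set of R-linear maps f : M → N such that the induced map Ω^n f : Ω^n M → Ω^n N between n-th syzygies (computed from chosen projective resolutions) factors through a projective module. Then V_n(M,N) is an R-submodule of Hom_R(M,N), and the ascending chain V_0(M,N) ⊆ V_1(M,N) ⊆ ⋯ stabilizes: there exists m ≥ 0 with V_ℓ(M,N) = V_m(M,N) for all ℓ ≥ m. -/
noncomputable section

/-- `SyzFactors R n f` : an induced map `Ω^n f` between `n`-th syzygies of `M` and `N`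
(computed from chosen free covers) factors through a projective (= f.g. free) module. -/
def SyzFactors (R : Type) [Ring R] :
    (n : ℕ) → {M : Type} → [AddCommGroup M] → [Module R M] →
      {N : Type} → [AddCommGroup N] → [Module R N] → (M →ₗ[R] N) → Prop
  | 0, _M, _, _, _N, _, _, f => FactorsThruFree R f
  | n + 1, _M, _, _, _N, _, _, f =>
      ∃ (a b : ℕ) (p : (Fin a → R) →ₗ[R] _M) (q : (Fin b → R) →ₗ[R] _N)
        (φ : (Fin a → R) →ₗ[R] (Fin b → R)),
        Function.Surjective p ∧ Function.Surjective q ∧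
        ∃ hcomm : q ∘ₗ φ = f ∘ₗ p,
          SyzFactors R n (φ.restrict (p := LinearMap.ker p) (q := LinearMap.ker q)
            (fun x hx => by
              have h1 : q (φ x) = f (p x) := LinearMap.congr_fun hcomm x
              rw [LinearMap.mem_ker] at hx ⊢
              rw [h1, hx, map_zero]))

section Aux

set_option linter.unusedSectionVars false

variable {R : Type} [CommRing R] [IsNoetherianRing R]

private lemma syz_congr {n : ℕ} {M N : Type} [AddCommGroup M] [Module R M]
    [AddCommGroup N] [Module R N] {f g : M →ₗ[R] N} (h : f = g)
    (hf : SyzFactors R n f) : SyzFactors R n g := h ▸ hf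

private lemma ftf_zero {M N : Type} [AddCommGroup M] [Module R M]
    [AddCommGroup N] [Module R N] : FactorsThruFree R (0 : M →ₗ[R] N) :=
  ⟨0, 0, 0, by refine LinearMap.ext fun x => ?_; simp⟩

/-- membership of the kernel-restriction. -/
private lemma ker_of_comm {M N : Type} [AddCommGroup M] [Module R M]
    [AddCommGroup N] [Module R N] {a b : ℕ} {f : M →ₗ[R] N}
    {p : (Fin a → R) →ₗ[R] M} {q : (Fin b → R) →ₗ[R] N}
    {φ : (Fin a → R) →ₗ[R] (Fin b → R)} (hcomm : q ∘ₗ φ = f ∘ₗ p) :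
    ∀ x ∈ LinearMap.ker p, φ x ∈ LinearMap.ker q := fun x hx => by
  have h1 : q (φ x) = f (p x) := LinearMap.congr_fun hcomm x
  rw [LinearMap.mem_ker] at hx ⊢
  rw [h1, hx, map_zero]

private lemma syz_zero : ∀ (n : ℕ) (M N : Type) [AddCommGroup M] [Module R M]
    [Module.Finite R M] [AddCommGroup N] [Module R N] [Module.Finite R N],
    SyzFactors R n (0 : M →ₗ[R] N) := by
  intro n
  induction n with
  | zero => intro M N _ _ _ _ _ _; exact ftf_zero
  | succ n ih =>
    intro M N _ _ _ _ _ _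
    obtain ⟨a, p, hp⟩ := Module.Finite.exists_fin' R M
    obtain ⟨b, q, hq⟩ := Module.Finite.exists_fin' R N
    have hcomm : q ∘ₗ (0 : (Fin a → R) →ₗ[R] (Fin b → R)) = (0 : M →ₗ[R] N) ∘ₗ p := by
      refine LinearMap.ext fun x => ?_; simp
    refine ⟨a, b, p, q, 0, hp, hq, hcomm, ?_⟩
    have hk : ∀ x ∈ LinearMap.ker p, (0 : (Fin a → R) →ₗ[R] (Fin b → R)) x ∈ LinearMap.ker q :=
      fun x _ => by simp
    have e : (0 : (Fin a → R) →ₗ[R] (Fin b → R)).restrict hk = 0 :=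
      LinearMap.ext fun x => Subtype.ext (by simp [LinearMap.restrict_apply])
    exact syz_congr e.symm (ih _ _)

private lemma syz_id : ∀ (n : ℕ) (c : ℕ),
    SyzFactors R n (LinearMap.id : (Fin c → R) →ₗ[R] (Fin c → R)) := by
  intro n
  induction n with
  | zero => intro c; exact ⟨c, LinearMap.id, LinearMap.id, rfl⟩
  | succ n ih =>
    intro c
    refine ⟨c, c, LinearMap.id, LinearMap.id, LinearMap.id,
      Function.surjective_id, Function.surjective_id, rfl, ?_⟩
    have hk : ∀ x ∈ LinearMap.ker (LinearMap.id : (Fin c → R) →ₗ[R] (Fin c → R)),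
        (LinearMap.id : (Fin c → R) →ₗ[R] (Fin c → R)) x ∈
          LinearMap.ker (LinearMap.id : (Fin c → R) →ₗ[R] (Fin c → R)) := fun x hx => hx
    have e : (LinearMap.id : (Fin c → R) →ₗ[R] (Fin c → R)).restrict hk = 0 := by
      refine LinearMap.ext fun x => Subtype.ext ?_
      have hx : (x : Fin c → R) = 0 := x.2
      show (LinearMap.id.restrict hk x : Fin c → R) = ((0 : _ →ₗ[R] _) x : Fin c → R)
      rw [LinearMap.restrict_apply]
      simp [hx]; rfl
    exact syz_congr e.symm (syz_zero n _ _)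

private lemma syz_comp : ∀ (n : ℕ) (M N M' N' : Type)
    [AddCommGroup M] [Module R M] [AddCommGroup N] [Module R N]
    [AddCommGroup M'] [Module R M'] [Module.Finite R M']
    [AddCommGroup N'] [Module R N'] [Module.Finite R N']
    (h : M →ₗ[R] N) (u : M' →ₗ[R] M) (v : N →ₗ[R] N'),
    SyzFactors R n h → SyzFactors R n (v ∘ₗ h ∘ₗ u) := by
  intro n
  induction n with
  | zero =>
    intro M N M' N' _ _ _ _ _ _ _ _ _ _ h u v hh
    obtain ⟨b, g, h₀, rfl⟩ := hh
    exact ⟨b, v ∘ₗ g, h₀ ∘ₗ u, by refine LinearMap.ext fun x => ?_; simp⟩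
  | succ n ih =>
    intro M N M' N' _ _ _ _ _ _ _ _ _ _ h u v hh
    obtain ⟨a, b, p, q, φ, hp, hq, hcomm, hres⟩ := hh
    obtain ⟨a', p', hp'⟩ := Module.Finite.exists_fin' R M'
    obtain ⟨b', q', hq'⟩ := Module.Finite.exists_fin' R N'
    obtain ⟨γ, hγ⟩ := Module.projective_lifting_property p (u ∘ₗ p') hp
    obtain ⟨ε, hε⟩ := Module.projective_lifting_property q' (v ∘ₗ q) hq'
    have hcomm' : q' ∘ₗ (ε ∘ₗ φ ∘ₗ γ) = (v ∘ₗ h ∘ₗ u) ∘ₗ p' := by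
      refine LinearMap.ext fun x => ?_
      have e1 : q' (ε (φ (γ x))) = v (q (φ (γ x))) := LinearMap.congr_fun hε (φ (γ x))
      have e2 : q (φ (γ x)) = h (p (γ x)) := LinearMap.congr_fun hcomm (γ x)
      have e3 : p (γ x) = u (p' x) := LinearMap.congr_fun hγ x
      simp only [LinearMap.comp_apply]
      rw [e1, e2, e3]
    refine ⟨a', b', p', q', ε ∘ₗ φ ∘ₗ γ, hp', hq', hcomm', ?_⟩
    have hγk : ∀ x ∈ LinearMap.ker p', γ x ∈ LinearMap.ker p := fun x hx => by
      have e3 : p (γ x) = u (p' x) := LinearMap.congr_fun hγ x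
      rw [LinearMap.mem_ker] at hx ⊢
      rw [e3, hx, map_zero]
    have hεk : ∀ y ∈ LinearMap.ker q, ε y ∈ LinearMap.ker q' := fun y hy => by
      have e1 : q' (ε y) = v (q y) := LinearMap.congr_fun hε y
      rw [LinearMap.mem_ker] at hy ⊢
      rw [e1, hy, map_zero]
    have hφk : ∀ x ∈ LinearMap.ker p, φ x ∈ LinearMap.ker q := ker_of_comm hcomm
    have hk' : ∀ x ∈ LinearMap.ker p', (ε ∘ₗ φ ∘ₗ γ) x ∈ LinearMap.ker q' :=
      fun x hx => hεk _ (hφk _ (hγk _ hx))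
    have e : (ε ∘ₗ φ ∘ₗ γ).restrict hk' =
        (ε.restrict hεk) ∘ₗ (φ.restrict hφk) ∘ₗ (γ.restrict hγk) :=
      LinearMap.ext fun x => Subtype.ext (by simp [LinearMap.restrict_apply])
    exact syz_congr e.symm (ih _ _ _ _ _ (γ.restrict hγk) (ε.restrict hεk) hres)

private lemma syz_free (n : ℕ) {M N : Type} [AddCommGroup M] [Module R M]
    [Module.Finite R M] [AddCommGroup N] [Module R N] [Module.Finite R N]
    (f : M →ₗ[R] N) (hf : FactorsThruFree R f) : SyzFactors R n f := by
  obtain ⟨b, g, h, rfl⟩ := hf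
  have := syz_comp n _ _ M N LinearMap.id h g (syz_id n b)
  exact syz_congr (by refine LinearMap.ext fun x => ?_; simp) this

private lemma syz_smul : ∀ (n : ℕ) (M N : Type)
    [AddCommGroup M] [Module R M] [AddCommGroup N] [Module R N]
    (c : R) (f : M →ₗ[R] N), SyzFactors R n f → SyzFactors R n (c • f) := by
  intro n
  induction n with
  | zero =>
    intro M N _ _ _ _ c f hf
    obtain ⟨b, g, h, rfl⟩ := hf
    exact ⟨b, c • g, h, by refine LinearMap.ext fun x => ?_; simp⟩
  | succ n ih =>
    intro M N _ _ _ _ c f hf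
    obtain ⟨a, b, p, q, φ, hp, hq, hcomm, hres⟩ := hf
    have hcomm' : q ∘ₗ (c • φ) = (c • f) ∘ₗ p := by
      refine LinearMap.ext fun x => ?_
      have e1 : q (φ x) = f (p x) := LinearMap.congr_fun hcomm x
      simp only [LinearMap.comp_apply, LinearMap.smul_apply, map_smul]
      rw [e1]
    refine ⟨a, b, p, q, c • φ, hp, hq, hcomm', ?_⟩
    have hφk : ∀ x ∈ LinearMap.ker p, φ x ∈ LinearMap.ker q := ker_of_comm hcomm
    have hk' : ∀ x ∈ LinearMap.ker p, (c • φ) x ∈ LinearMap.ker q := fun x hx => by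
      have := hφk x hx
      rw [LinearMap.mem_ker] at this ⊢
      simp [this]
    have e : (c • φ).restrict hk' = c • (φ.restrict hφk) :=
      LinearMap.ext fun x => Subtype.ext (by simp [LinearMap.restrict_apply])
    exact syz_congr e.symm (ih _ _ c _ hres)

private lemma ftf_add {M N : Type} [AddCommGroup M] [Module R M]
    [AddCommGroup N] [Module R N] {f₁ f₂ : M →ₗ[R] N}
    (h₁ : FactorsThruFree R f₁) (h₂ : FactorsThruFree R f₂) :
    FactorsThruFree R (f₁ + f₂) := by
  obtain ⟨b₁, g₁, h₁', rfl⟩ := h₁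
  obtain ⟨b₂, g₂, h₂', rfl⟩ := h₂
  let E : (Fin (b₁ + b₂) → R) ≃ₗ[R] (Fin b₁ → R) × (Fin b₂ → R) :=
    (LinearEquiv.funCongrLeft R R finSumFinEquiv).trans
      (LinearEquiv.sumArrowLequivProdArrow (Fin b₁) (Fin b₂) R R)
  refine ⟨b₁ + b₂, (LinearMap.coprod g₁ g₂) ∘ₗ (E : (Fin (b₁ + b₂) → R) →ₗ[R] _),
    (E.symm : ((Fin b₁ → R) × (Fin b₂ → R)) →ₗ[R] _) ∘ₗ (LinearMap.prod h₁' h₂'), ?_⟩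
  refine LinearMap.ext fun x => ?_
  simp only [LinearMap.comp_apply, LinearMap.add_apply, LinearEquiv.coe_coe,
    LinearEquiv.apply_symm_apply, LinearMap.coprod_apply, LinearMap.prod_apply, Function.prod]

private lemma syz_compare (n : ℕ)
    (hadd : ∀ (M N : Type) [AddCommGroup M] [Module R M] [Module.Finite R M]
      [AddCommGroup N] [Module R N] [Module.Finite R N] (f g : M →ₗ[R] N),
      SyzFactors R n f → SyzFactors R n g → SyzFactors R n (f + g))
    {M N : Type} [AddCommGroup M] [Module R M] [AddCommGroup N] [Module R N]
    (f : M →ₗ[R] N) {a₁ b₁ a₂ b₂ : ℕ}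
    (p₁ : (Fin a₁ → R) →ₗ[R] M) (q₁ : (Fin b₁ → R) →ₗ[R] N)
    (φ₁ : (Fin a₁ → R) →ₗ[R] (Fin b₁ → R))
    (p₂ : (Fin a₂ → R) →ₗ[R] M) (q₂ : (Fin b₂ → R) →ₗ[R] N)
    (φ₂ : (Fin a₂ → R) →ₗ[R] (Fin b₂ → R))
    (hp₁ : Function.Surjective p₁) (hq₂ : Function.Surjective q₂)
    (hc₁ : q₁ ∘ₗ φ₁ = f ∘ₗ p₁) (hc₂ : q₂ ∘ₗ φ₂ = f ∘ₗ p₂)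
    (hk₁ : ∀ x ∈ LinearMap.ker p₁, φ₁ x ∈ LinearMap.ker q₁)
    (hk₂ : ∀ x ∈ LinearMap.ker p₂, φ₂ x ∈ LinearMap.ker q₂)
    (h₁ : SyzFactors R n (φ₁.restrict hk₁)) : SyzFactors R n (φ₂.restrict hk₂) := by
  obtain ⟨α, hα⟩ := Module.projective_lifting_property p₁ p₂ hp₁
  obtain ⟨β, hβ⟩ := Module.projective_lifting_property q₂ q₁ hq₂
  have hαk : ∀ x ∈ LinearMap.ker p₂, α x ∈ LinearMap.ker p₁ := fun x hx => by
    have e4 : p₁ (α x) = p₂ x := LinearMap.congr_fun hα x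
    rw [LinearMap.mem_ker] at hx ⊢
    rw [e4, hx]
  have hβk : ∀ y ∈ LinearMap.ker q₁, β y ∈ LinearMap.ker q₂ := fun y hy => by
    have e5 : q₂ (β y) = q₁ y := LinearMap.congr_fun hβ y
    rw [LinearMap.mem_ker] at hy ⊢
    rw [e5, hy]
  set δ : (Fin a₂ → R) →ₗ[R] (Fin b₂ → R) := φ₂ - β ∘ₗ φ₁ ∘ₗ α with hδdef
  have hδ : ∀ x, δ x ∈ LinearMap.ker q₂ := fun x => by
    have e1 : q₂ (φ₂ x) = f (p₂ x) := LinearMap.congr_fun hc₂ x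
    have e2 : q₂ (β (φ₁ (α x))) = q₁ (φ₁ (α x)) := LinearMap.congr_fun hβ (φ₁ (α x))
    have e3 : q₁ (φ₁ (α x)) = f (p₁ (α x)) := LinearMap.congr_fun hc₁ (α x)
    have e4 : p₁ (α x) = p₂ x := LinearMap.congr_fun hα x
    rw [LinearMap.mem_ker]
    simp only [hδdef, LinearMap.sub_apply, LinearMap.comp_apply, map_sub]
    rw [e1, e2, e3, e4, sub_self]
  set D : ↥(LinearMap.ker p₂) →ₗ[R] ↥(LinearMap.ker q₂) :=
    (LinearMap.codRestrict (LinearMap.ker q₂) δ hδ) ∘ₗ (LinearMap.ker p₂).subtype with hDdef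
  have hD : SyzFactors R n D :=
    syz_free n D ⟨a₂, LinearMap.codRestrict (LinearMap.ker q₂) δ hδ,
      (LinearMap.ker p₂).subtype, rfl⟩
  have hC : SyzFactors R n
      ((β.restrict hβk) ∘ₗ (φ₁.restrict hk₁) ∘ₗ (α.restrict hαk)) :=
    syz_comp n _ _ _ _ (φ₁.restrict hk₁) (α.restrict hαk) (β.restrict hβk) h₁
  have e : φ₂.restrict hk₂ =
      (β.restrict hβk) ∘ₗ (φ₁.restrict hk₁) ∘ₗ (α.restrict hαk) + D := by
    refine LinearMap.ext fun x => Subtype.ext ?_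
    simp only [LinearMap.restrict_apply, LinearMap.add_apply, LinearMap.comp_apply,
      Submodule.coe_add, hDdef, LinearMap.codRestrict_apply, Submodule.coe_subtype,
      hδdef, LinearMap.sub_apply]
    abel
  exact syz_congr e.symm (hadd _ _ _ _ hC hD)

private lemma syz_add : ∀ (n : ℕ) (M N : Type)
    [AddCommGroup M] [Module R M] [Module.Finite R M]
    [AddCommGroup N] [Module R N] [Module.Finite R N] (f g : M →ₗ[R] N),
    SyzFactors R n f → SyzFactors R n g → SyzFactors R n (f + g) := by
  intro n
  induction n with
  | zero =>
    intro M N _ _ _ _ _ _ f g hf hg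
    exact ftf_add hf hg
  | succ n ih =>
    intro M N _ _ _ _ _ _ f₁ f₂ hf₁ hf₂
    obtain ⟨a₁, b₁, p₁, q₁, φ₁, hp₁, hq₁, hc₁, hres₁⟩ := hf₁
    obtain ⟨a₂, b₂, p₂, q₂, φ₂, hp₂, hq₂, hc₂, hres₂⟩ := hf₂
    obtain ⟨a, p, hp⟩ := Module.Finite.exists_fin' R M
    obtain ⟨b, q, hq⟩ := Module.Finite.exists_fin' R N
    obtain ⟨ψ₁, hψ₁⟩ := Module.projective_lifting_property q (f₁ ∘ₗ p) hq
    obtain ⟨ψ₂, hψ₂⟩ := Module.projective_lifting_property q (f₂ ∘ₗ p) hq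
    have hkψ₁ : ∀ x ∈ LinearMap.ker p, ψ₁ x ∈ LinearMap.ker q := ker_of_comm hψ₁
    have hkψ₂ : ∀ x ∈ LinearMap.ker p, ψ₂ x ∈ LinearMap.ker q := ker_of_comm hψ₂
    have hk₁ : ∀ x ∈ LinearMap.ker p₁, φ₁ x ∈ LinearMap.ker q₁ := ker_of_comm hc₁
    have hk₂ : ∀ x ∈ LinearMap.ker p₂, φ₂ x ∈ LinearMap.ker q₂ := ker_of_comm hc₂
    have hres₁' : SyzFactors R n (ψ₁.restrict hkψ₁) :=
      syz_compare n ih f₁ p₁ q₁ φ₁ p q ψ₁ hp₁ hq hc₁ hψ₁ hk₁ hkψ₁ hres₁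
    have hres₂' : SyzFactors R n (ψ₂.restrict hkψ₂) :=
      syz_compare n ih f₂ p₂ q₂ φ₂ p q ψ₂ hp₂ hq hc₂ hψ₂ hk₂ hkψ₂ hres₂
    have hcomm : q ∘ₗ (ψ₁ + ψ₂) = (f₁ + f₂) ∘ₗ p := by
      refine LinearMap.ext fun x => ?_
      have e1 : q (ψ₁ x) = f₁ (p x) := LinearMap.congr_fun hψ₁ x
      have e2 : q (ψ₂ x) = f₂ (p x) := LinearMap.congr_fun hψ₂ x
      simp only [LinearMap.comp_apply, LinearMap.add_apply, map_add]
      rw [e1, e2]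
    refine ⟨a, b, p, q, ψ₁ + ψ₂, hp, hq, hcomm, ?_⟩
    have hk : ∀ x ∈ LinearMap.ker p, (ψ₁ + ψ₂) x ∈ LinearMap.ker q := fun x hx => by
      have h1 := hkψ₁ x hx
      have h2 := hkψ₂ x hx
      rw [LinearMap.mem_ker] at h1 h2 ⊢
      simp [h1, h2]
    have e : (ψ₁ + ψ₂).restrict hk = ψ₁.restrict hkψ₁ + ψ₂.restrict hkψ₂ :=
      LinearMap.ext fun x => Subtype.ext (by simp [LinearMap.restrict_apply])
    exact syz_congr e.symm (ih _ _ _ _ hres₁' hres₂')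

private lemma syz_step : ∀ (n : ℕ) (M N : Type)
    [AddCommGroup M] [Module R M] [Module.Finite R M]
    [AddCommGroup N] [Module R N] [Module.Finite R N] (f : M →ₗ[R] N),
    SyzFactors R n f → SyzFactors R (n + 1) f := by
  intro n
  induction n with
  | zero =>
    intro M N _ _ _ _ _ _ f hf
    obtain ⟨c, g, h₀, rfl⟩ := hf
    obtain ⟨a, p, hp⟩ := Module.Finite.exists_fin' R M
    obtain ⟨b₀, q₀, hq₀⟩ := Module.Finite.exists_fin' R N
    let E : (Fin (b₀ + c) → R) ≃ₗ[R] (Fin b₀ → R) × (Fin c → R) :=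
      (LinearEquiv.funCongrLeft R R finSumFinEquiv).trans
        (LinearEquiv.sumArrowLequivProdArrow (Fin b₀) (Fin c) R R)
    set q : (Fin (b₀ + c) → R) →ₗ[R] N :=
      (LinearMap.coprod q₀ g) ∘ₗ (E : (Fin (b₀ + c) → R) →ₗ[R] _) with hqdef
    set φ : (Fin a → R) →ₗ[R] (Fin (b₀ + c) → R) :=
      (E.symm : ((Fin b₀ → R) × (Fin c → R)) →ₗ[R] _) ∘ₗ
        (LinearMap.prod 0 (h₀ ∘ₗ p)) with hφdef
    have hqsurj : Function.Surjective q := by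
      intro y
      obtain ⟨z, hz⟩ := hq₀ y
      refine ⟨E.symm (z, 0), ?_⟩
      simp only [hqdef, LinearMap.comp_apply, LinearEquiv.coe_coe,
        LinearEquiv.apply_symm_apply, LinearMap.coprod_apply, map_zero, add_zero, hz]
    have hcomm : q ∘ₗ φ = (g ∘ₗ h₀) ∘ₗ p := by
      refine LinearMap.ext fun x => ?_
      simp only [hqdef, hφdef, LinearMap.comp_apply, LinearEquiv.coe_coe,
        LinearEquiv.apply_symm_apply, LinearMap.coprod_apply, LinearMap.prod_apply,
        Function.prod, LinearMap.zero_apply, map_zero, zero_add]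
    refine ⟨a, b₀ + c, p, q, φ, hp, hqsurj, hcomm, ?_⟩
    have hk : ∀ x ∈ LinearMap.ker p, φ x ∈ LinearMap.ker q := ker_of_comm hcomm
    have e : φ.restrict hk = 0 := by
      refine LinearMap.ext fun x => Subtype.ext ?_
      have hx : p (x : Fin a → R) = 0 := x.2
      simp only [LinearMap.restrict_apply, hφdef, LinearMap.comp_apply,
        LinearMap.prod_apply, Function.prod, LinearMap.zero_apply, hx, map_zero,
        Prod.mk_zero_zero, LinearMap.zero_apply, ZeroMemClass.coe_zero]
    exact syz_congr e.symm ftf_zero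
  | succ n ih =>
    intro M N _ _ _ _ _ _ f hf
    obtain ⟨a, b, p, q, φ, hp, hq, hcomm, hres⟩ := hf
    exact ⟨a, b, p, q, φ, hp, hq, hcomm, ih _ _ _ hres⟩

end Aux

/-- The sets `V_n(M,N) = {f : M → N | Ω^n f factors through a projective}` are
`R`-submodules of `Hom_R(M,N)`, and the ascending chain `V_0 ⊆ V_1 ⊆ ⋯` stabilizes. -/
theorem stmt_8 (R : Type) [CommRing R] [IsNoetherianRing R] [IsLocalRing R]
    (M N : Type) [AddCommGroup M] [Module R M] [Module.Finite R M]
    [AddCommGroup N] [Module R N] [Module.Finite R N] :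
    (∀ n : ℕ, ∃ V : Submodule R (M →ₗ[R] N),
        (V : Set (M →ₗ[R] N)) = {f | SyzFactors R n f}) ∧
    (∀ n : ℕ, {f : M →ₗ[R] N | SyzFactors R n f} ⊆ {f | SyzFactors R (n + 1) f}) ∧
    (∃ m : ℕ, ∀ l : ℕ, m ≤ l →
        {f : M →ₗ[R] N | SyzFactors R l f} = {f | SyzFactors R m f}) := by
  have hsub : ∀ n : ℕ, ∃ V : Submodule R (M →ₗ[R] N),
      (V : Set (M →ₗ[R] N)) = {f | SyzFactors R n f} := fun n =>
    ⟨{ carrier := {f | SyzFactors R n f}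
       add_mem' := fun hf hg => syz_add n M N _ _ hf hg
       zero_mem' := syz_zero n M N
       smul_mem' := fun c f hf => syz_smul n M N c f hf }, rfl⟩
  have hmono : ∀ n : ℕ, {f : M →ₗ[R] N | SyzFactors R n f} ⊆
      {f | SyzFactors R (n + 1) f} := fun n f hf => syz_step n M N f hf
  refine ⟨hsub, hmono, ?_⟩
  choose V hV using hsub
  have hVmono : Monotone V := monotone_nat_of_le_succ (fun n => by
    rw [← SetLike.coe_subset_coe, hV, hV]
    exact hmono n)
  obtain ⟨m, hm⟩ := monotone_stabilizes_iff_noetherian.mpr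
    (inferInstance : IsNoetherian R (M →ₗ[R] N)) ⟨V, hVmono⟩
  refine ⟨m, fun l hl => ?_⟩
  have : V m = V l := hm l hl
  rw [← hV l, ← hV m, this]
end
end

section
/- Let R be a commutative noetherian local ring with residue field k, let M, N be finitely generated R-modules, and n ≥ 0. Then ξ(n, M ⊕ N) = ξ(n, M) + ξ(n, N). -/
noncomputable section

/-- The `n`-th approximated ξ-invariant: the dimension over the residue field `k` of the
subspace of `Hom_R(M, k)` of maps whose `n`-th syzygy factors through a projective. -/
def xi (R : Type) [CommRing R] [IsLocalRing R] (n : ℕ)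
    (M : Type) [AddCommGroup M] [Module R M] : ℕ :=
  Module.finrank (IsLocalRing.ResidueField R)
    (Submodule.span (IsLocalRing.ResidueField R)
      {f : M →ₗ[R] IsLocalRing.ResidueField R | SyzFactors R n f})

-- auxiliary lemmas

theorem syzFactors_congr {R : Type} [Ring R] {n : ℕ} {M N : Type} [AddCommGroup M] [Module R M]
    [AddCommGroup N] [Module R N] {f g : M →ₗ[R] N} (h : f = g)
    (hf : SyzFactors R n f) : SyzFactors R n g := h ▸ hf

theorem restrict_comp' {R M N P : Type} [Ring R] [AddCommGroup M] [Module R M]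
    [AddCommGroup N] [Module R N] [AddCommGroup P] [Module R P]
    (f : M →ₗ[R] N) (g : N →ₗ[R] P) {pM : Submodule R M} {pN : Submodule R N}
    {pP : Submodule R P} (hf : ∀ x ∈ pM, f x ∈ pN) (hg : ∀ x ∈ pN, g x ∈ pP)
    (hgf : ∀ x ∈ pM, (g ∘ₗ f) x ∈ pP) :
    (g ∘ₗ f).restrict hgf = (g.restrict hg) ∘ₗ (f.restrict hf) := rfl

theorem syzFactors_comp (R : Type) [CommRing R] [IsNoetherianRing R] (n : ℕ) :
    ∀ {M' M N : Type} [AddCommGroup M'] [Module R M'] [AddCommGroup M] [Module R M]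
      [AddCommGroup N] [Module R N] [Module.Finite R M'] (f : M →ₗ[R] N) (h : M' →ₗ[R] M),
      SyzFactors R n f → SyzFactors R n (f ∘ₗ h) := by
  induction n with
  | zero =>
    intro M' M N _ _ _ _ _ _ _ f h hf
    obtain ⟨b, g, H, hfact⟩ := hf
    exact ⟨b, g, H ∘ₗ h, by rw [hfact, LinearMap.comp_assoc]⟩
  | succ n ih =>
    intro M' M N _ _ _ _ _ _ _ f h hf
    obtain ⟨a, b, p, q, φ, hp, hq, hcomm, hsyz⟩ := hf
    obtain ⟨a', p', hp'⟩ := Module.Finite.exists_fin' R M'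
    obtain ⟨H, hH⟩ := Module.projective_lifting_property p (h ∘ₗ p') hp
    have hcomm' : q ∘ₗ (φ ∘ₗ H) = (f ∘ₗ h) ∘ₗ p' := by
      rw [← LinearMap.comp_assoc, hcomm, LinearMap.comp_assoc, hH, ← LinearMap.comp_assoc]
    refine ⟨a', b, p', q, φ ∘ₗ H, hp', hq, hcomm', ?_⟩
    have hHk : ∀ x ∈ LinearMap.ker p', H x ∈ LinearMap.ker p := by
      intro x hx
      have h2 : p (H x) = h (p' x) := LinearMap.congr_fun hH x
      rw [LinearMap.mem_ker] at hx ⊢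
      rw [h2, hx, map_zero]
    have hφk : ∀ x ∈ LinearMap.ker p, φ x ∈ LinearMap.ker q := by
      intro x hx
      have h1 : q (φ x) = f (p x) := LinearMap.congr_fun hcomm x
      rw [LinearMap.mem_ker] at hx ⊢
      rw [h1, hx, map_zero]
    haveI : Module.Finite R ↥(LinearMap.ker p') :=
      Module.Finite.iff_fg.mpr (IsNoetherian.noetherian _)
    have step := ih (φ.restrict hφk) (H.restrict hHk) hsyz
    exact syzFactors_congr (restrict_comp' H φ hHk hφk fun x hx => hφk _ (hHk x hx)).symm step

open IsLocalRing

theorem findim_hom (R : Type) [CommRing R] [IsLocalRing R] (M : Type) [AddCommGroup M]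
    [Module R M] [Module.Finite R M] :
    FiniteDimensional (ResidueField R) (M →ₗ[R] ResidueField R) := by
  obtain ⟨m, p, hp⟩ := Module.Finite.exists_fin' R M
  let Φ : (M →ₗ[R] ResidueField R) →ₗ[ResidueField R] ((Fin m → R) →ₗ[R] ResidueField R) :=
    { toFun := fun f => f ∘ₗ p
      map_add' := fun f g => by ext; rfl
      map_smul' := fun c f => by ext; rfl }
  have hΦ : Function.Injective Φ := by
    intro f g hfg
    ext x
    obtain ⟨y, rfl⟩ := hp x
    exact LinearMap.congr_fun hfg y
  haveI : FiniteDimensional (ResidueField R) ((Fin m → R) →ₗ[R] ResidueField R) :=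
    Module.Finite.equiv (LinearEquiv.piRing R (ResidueField R) (Fin m) (ResidueField R)).symm
  exact FiniteDimensional.of_injective Φ hΦ

def subProdEquiv {K M N : Type} [Ring K] [AddCommGroup M] [Module K M] [AddCommGroup N]
    [Module K N] (p : Submodule K M) (q : Submodule K N) : ↥(p.prod q) ≃ₗ[K] ↥p × ↥q where
  toFun x := (⟨x.1.1, x.2.1⟩, ⟨x.1.2, x.2.2⟩)
  map_add' _ _ := rfl
  map_smul' _ _ := rfl
  invFun x := ⟨(x.1.1, x.2.1), x.1.2, x.2.2⟩
  left_inv _ := rfl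
  right_inv _ := rfl

set_option maxHeartbeats 2000000 in

/-- Additivity of the `n`-th approximated ξ-invariant: `ξ(n, M ⊕ N) = ξ(n,M) + ξ(n,N)`. -/
theorem stmt_10 (R : Type) [CommRing R] [IsNoetherianRing R] [IsLocalRing R]
    (M N : Type) [AddCommGroup M] [Module R M] [Module.Finite R M]
    [AddCommGroup N] [Module R N] [Module.Finite R N] (n : ℕ) :
    xi R n (M × N) = xi R n M + xi R n N := by
  classical
  let k := ResidueField R
  let A : Set (M →ₗ[R] k) := {f | SyzFactors R n f}
  let B : Set (N →ₗ[R] k) := {f | SyzFactors R n f}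
  let C : Set (M × N →ₗ[R] k) := {f | SyzFactors R n f}
  let e : ((M →ₗ[R] k) × (N →ₗ[R] k)) ≃ₗ[k] (M × N →ₗ[R] k) := LinearMap.coprodEquiv k
  have he : ∀ x : (M →ₗ[R] k) × (N →ₗ[R] k), e x = x.1.coprod x.2 := fun _ => rfl
  have hesymm : ∀ g : M × N →ₗ[R] k,
      e.symm g = (g ∘ₗ LinearMap.inl R M N, g ∘ₗ LinearMap.inr R M N) := fun _ => rfl
  have hmap : (Submodule.span k C).map (e.symm : (M × N →ₗ[R] k) →ₗ[k] (M →ₗ[R] k) × (N →ₗ[R] k))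
      = (Submodule.span k A).prod (Submodule.span k B) := by
    rw [Submodule.map_span]
    apply le_antisymm
    · rw [Submodule.span_le]
      rintro _ ⟨g, hg, rfl⟩
      refine Submodule.mem_prod.mpr ⟨Submodule.subset_span ?_, Submodule.subset_span ?_⟩
      · exact syzFactors_comp R n g (LinearMap.inl R M N) hg
      · exact syzFactors_comp R n g (LinearMap.inr R M N) hg
    · rintro ⟨x, y⟩ hxy
      rw [Submodule.mem_prod] at hxy
      have hinl : (LinearMap.inl k (M →ₗ[R] k) (N →ₗ[R] k)) '' A ⊆ ⇑e.symm '' C := by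
        rintro _ ⟨f, hf, rfl⟩
        refine ⟨f ∘ₗ LinearMap.fst R M N, syzFactors_comp R n f (LinearMap.fst R M N) hf, ?_⟩
        have h1 : (f ∘ₗ LinearMap.fst R M N) ∘ₗ LinearMap.inl R M N = f := by ext z; simp
        have h2 : (f ∘ₗ LinearMap.fst R M N) ∘ₗ LinearMap.inr R M N = 0 := by ext z; simp
        show ((f ∘ₗ LinearMap.fst R M N) ∘ₗ LinearMap.inl R M N,
          (f ∘ₗ LinearMap.fst R M N) ∘ₗ LinearMap.inr R M N) = _
        rw [h1, h2]
        rfl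
      have hinr : (LinearMap.inr k (M →ₗ[R] k) (N →ₗ[R] k)) '' B ⊆ ⇑e.symm '' C := by
        rintro _ ⟨f, hf, rfl⟩
        refine ⟨f ∘ₗ LinearMap.snd R M N, syzFactors_comp R n f (LinearMap.snd R M N) hf, ?_⟩
        have h1 : (f ∘ₗ LinearMap.snd R M N) ∘ₗ LinearMap.inl R M N = 0 := by ext z; simp
        have h2 : (f ∘ₗ LinearMap.snd R M N) ∘ₗ LinearMap.inr R M N = f := by ext z; simp
        show ((f ∘ₗ LinearMap.snd R M N) ∘ₗ LinearMap.inl R M N,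
          (f ∘ₗ LinearMap.snd R M N) ∘ₗ LinearMap.inr R M N) = _
        rw [h1, h2]
        rfl
      have hx : ((x, 0) : (M →ₗ[R] k) × (N →ₗ[R] k)) ∈ Submodule.span k (⇑e.symm '' C) := by
        have h1 : ((x, 0) : (M →ₗ[R] k) × (N →ₗ[R] k)) ∈
            (Submodule.span k A).map (LinearMap.inl k (M →ₗ[R] k) (N →ₗ[R] k)) :=
          Submodule.mem_map_of_mem hxy.1
        rw [Submodule.map_span] at h1
        exact Submodule.span_mono hinl h1
      have hy : ((0, y) : (M →ₗ[R] k) × (N →ₗ[R] k)) ∈ Submodule.span k (⇑e.symm '' C) := by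
        have h1 : ((0, y) : (M →ₗ[R] k) × (N →ₗ[R] k)) ∈
            (Submodule.span k B).map (LinearMap.inr k (M →ₗ[R] k) (N →ₗ[R] k)) :=
          Submodule.mem_map_of_mem hxy.2
        rw [Submodule.map_span] at h1
        exact Submodule.span_mono hinr h1
      have : ((x, y) : (M →ₗ[R] k) × (N →ₗ[R] k)) = (x, 0) + (0, y) := by simp
      rw [this]
      exact add_mem hx hy
  haveI := findim_hom R M
  haveI := findim_hom R N
  have h1 : Module.finrank k ((Submodule.span k C).map
      (e.symm : (M × N →ₗ[R] k) →ₗ[k] (M →ₗ[R] k) × (N →ₗ[R] k))) = Module.finrank k (Submodule.span k C) :=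
    LinearEquiv.finrank_map_eq e.symm (Submodule.span k C)
  have h2 : Module.finrank k ((Submodule.span k A).prod (Submodule.span k B))
      = Module.finrank k (Submodule.span k A) + Module.finrank k (Submodule.span k B) := by
    rw [LinearEquiv.finrank_eq (subProdEquiv (Submodule.span k A) (Submodule.span k B))]
    haveI : Module.Free k (Submodule.span k A) := @Module.Free.of_divisionRing k (Submodule.span k A) _ _ _
    haveI : Module.Free k (Submodule.span k B) := @Module.Free.of_divisionRing k (Submodule.span k B) _ _ _
    exact Module.finrank_prod
  unfold xi
  rw [← h1, hmap, h2]
end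
end

section
/- Let R be a commutative noetherian local ring, M a finitely generated R-module, and n ≥ 0. Then ξ(n, M) ≤ ξ(n+1, M) ≤ μ(M), where μ(M) is the minimal number of generators of M. Consequently the sequence (ξ(n,M))_n is eventually constant, with limit ξ(M) = dim_k { f ∈ Hom_R(M,k) : Ω^m f factors through a projective for some m ≥ 0 }. -/
noncomputable section

/-- The minimal number of generators of a module. -/
def mu (R : Type) [Ring R] (M : Type) [AddCommGroup M] [Module R M] : ℕ :=
  sInf {n : ℕ | ∃ s : Fin n → M, Submodule.span R (Set.range s) = ⊤}

lemma factorsThruFree_of_zero {R M N : Type} [Ring R] [AddCommGroup M] [Module R M]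
    [AddCommGroup N] [Module R N] (f : M →ₗ[R] N) (hf : ∀ x, f x = 0) :
    FactorsThruFree R f :=
  ⟨0, 0, 0, by ext x; simp [hf]⟩

lemma syzFactors_succ {R : Type} [CommRing R] [IsNoetherianRing R] :
    ∀ (n : ℕ) {M N : Type} [AddCommGroup M] [Module R M] [AddCommGroup N] [Module R N]
      [Module.Finite R M] [Module.Finite R N] (f : M →ₗ[R] N),
      SyzFactors R n f → SyzFactors R (n + 1) f := by
  intro n
  induction n with
  | zero =>
    intro M N _ _ _ _ _ _ f hf
    obtain ⟨c, g, h, rfl⟩ := hf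
    obtain ⟨a, p, hp⟩ := Module.Finite.exists_fin' R M
    obtain ⟨b₀, q₀, hq₀⟩ := Module.Finite.exists_fin' R N
    refine ⟨a, b₀ + c, p,
      q₀ ∘ₗ LinearMap.funLeft R R (Fin.castAdd c) + g ∘ₗ LinearMap.funLeft R R (Fin.natAdd b₀),
      (Function.ExtendByZero.linearMap R (Fin.natAdd b₀)) ∘ₗ h ∘ₗ p, hp, ?_, ?_⟩
    · -- surjectivity of q
      intro y
      obtain ⟨x, hx⟩ := hq₀ y
      refine ⟨Function.ExtendByZero.linearMap R (Fin.castAdd c) x, ?_⟩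
      have h1 : (LinearMap.funLeft R R (Fin.castAdd c))
          ((Function.ExtendByZero.linearMap R (Fin.castAdd c)) x) = x := by
        funext i
        simp [LinearMap.funLeft, Function.ExtendByZero.linearMap,
          (Fin.castAdd_injective _ _).extend_apply]
        exact (Fin.castAdd_injective _ _).extend_apply _ _ _
      have h2 : (LinearMap.funLeft R R (Fin.natAdd b₀))
          ((Function.ExtendByZero.linearMap R (Fin.castAdd c)) x) = 0 := by
        funext j
        simp only [LinearMap.funLeft_apply, Function.ExtendByZero.linearMap_apply]
        rw [Function.extend_apply']
        · rfl
        · rintro ⟨i, hi⟩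
          have := congrArg Fin.val hi
          simp [Fin.castAdd, Fin.natAdd] at this
          omega
      simp [h1, h2, hx]
    · have hc : (q₀ ∘ₗ LinearMap.funLeft R R (Fin.castAdd c) +
          g ∘ₗ LinearMap.funLeft R R (Fin.natAdd b₀)) ∘ₗ
          ((Function.ExtendByZero.linearMap R (Fin.natAdd b₀)) ∘ₗ h ∘ₗ p)
          = (g ∘ₗ h) ∘ₗ p := by
        apply LinearMap.ext; intro x
        have h1 : (LinearMap.funLeft R R (Fin.castAdd c))
            ((Function.ExtendByZero.linearMap R (Fin.natAdd b₀)) (h (p x))) = 0 := by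
          funext i
          simp only [LinearMap.funLeft_apply, Function.ExtendByZero.linearMap_apply]
          rw [Function.extend_apply']
          · rfl
          · rintro ⟨j, hj⟩
            have := congrArg Fin.val hj
            simp [Fin.castAdd, Fin.natAdd] at this
            omega
        have h2 : (LinearMap.funLeft R R (Fin.natAdd b₀))
            ((Function.ExtendByZero.linearMap R (Fin.natAdd b₀)) (h (p x))) = h (p x) := by
          funext j
          have hinj : Function.Injective (Fin.natAdd b₀ : Fin c → Fin (b₀ + c)) :=
            fun i j hij => Fin.ext (by
              have := congrArg Fin.val hij; simp at this; omega)
          simp [LinearMap.funLeft, Function.ExtendByZero.linearMap, hinj.extend_apply]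
          exact hinj.extend_apply _ _ _
        simp [h1, h2]
      refine ⟨hc, ?_⟩
      show FactorsThruFree R _
      apply factorsThruFree_of_zero
      rintro ⟨x, hx⟩
      rw [LinearMap.mem_ker] at hx
      apply Subtype.ext
      show (Function.ExtendByZero.linearMap R (Fin.natAdd b₀) ∘ₗ h ∘ₗ p) x = 0
      simp [hx]
  | succ n ih =>
    intro M N _ _ _ _ _ _ f hf
    obtain ⟨a, b, p, q, φ, hp, hq, hcomm, hsyz⟩ := hf
    haveI : Module.Finite R (LinearMap.ker p) :=
      Module.Finite.iff_fg.mpr (IsNoetherian.noetherian _)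
    haveI : Module.Finite R (LinearMap.ker q) :=
      Module.Finite.iff_fg.mpr (IsNoetherian.noetherian _)
    exact ⟨a, b, p, q, φ, hp, hq, hcomm, ih _ hsyz⟩


/-- The sequence `ξ(0,M) ≤ ξ(1,M) ≤ ⋯` is non-decreasing and bounded above by `μ(M)`,
hence eventually constant, with limit the ξ-invariant
`ξ(M) = dim_k {f : M → k | Ω^m f factors through a projective for some m}`. -/
theorem stmt_12 (R : Type) [CommRing R] [IsNoetherianRing R] [IsLocalRing R]
    (M : Type) [AddCommGroup M] [Module R M] [Module.Finite R M] :
    (∀ n : ℕ, xi R n M ≤ xi R (n + 1) M) ∧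
    (∀ n : ℕ, xi R (n + 1) M ≤ mu R M) ∧
    (∃ m : ℕ, ∀ l : ℕ, m ≤ l →
      xi R l M =
        Module.finrank (IsLocalRing.ResidueField R)
          (Submodule.span (IsLocalRing.ResidueField R)
            {f : M →ₗ[R] IsLocalRing.ResidueField R | ∃ j : ℕ, SyzFactors R j f})) := by
  set k := IsLocalRing.ResidueField R with hk
  have hne : {n : ℕ | ∃ s : Fin n → M, Submodule.span R (Set.range s) = ⊤}.Nonempty := by
    obtain ⟨n, s, hs⟩ := Module.Finite.exists_fin (R := R) (M := M)
    exact ⟨n, s, hs⟩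
  obtain ⟨s, hs⟩ : ∃ s : Fin (mu R M) → M, Submodule.span R (Set.range s) = ⊤ :=
    Nat.sInf_mem hne
  let T : (M →ₗ[R] k) →ₗ[k] (Fin (mu R M) → k) :=
    { toFun := fun f i => f (s i)
      map_add' := fun f g => rfl
      map_smul' := fun c f => rfl }
  have hT : Function.Injective T := by
    intro f g hfg
    refine LinearMap.ext_on_range hs (fun i => ?_)
    exact congrFun hfg i
  haveI : FiniteDimensional k (M →ₗ[R] k) := FiniteDimensional.of_injective T hT
  have hhom : Module.finrank k (M →ₗ[R] k) ≤ mu R M := by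
    have := LinearMap.finrank_le_finrank_of_injective hT
    simpa [Module.finrank_fin_fun] using this
  have hsub : ∀ n : ℕ, {f : M →ₗ[R] k | SyzFactors R n f} ⊆
      {f : M →ₗ[R] k | SyzFactors R (n + 1) f} :=
    fun n f hf => by
      haveI : Module.Finite R k :=
        Module.Finite.of_surjective (IsLocalRing.maximalIdeal R).mkQ
          (Submodule.mkQ_surjective _)
      exact syzFactors_succ n f hf
  have hspan : Monotone (fun n => Submodule.span k {f : M →ₗ[R] k | SyzFactors R n f}) :=
    monotone_nat_of_le_succ (fun n => Submodule.span_mono (hsub n))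
  have hximono : ∀ m n : ℕ, m ≤ n → xi R m M ≤ xi R n M :=
    fun m n hmn => Submodule.finrank_mono (hspan hmn)
  have hxibound : ∀ n : ℕ, xi R n M ≤ mu R M :=
    fun n => le_trans (Submodule.finrank_le _) hhom
  refine ⟨fun n => hximono n (n + 1) (Nat.le_succ n), fun n => hxibound _, ?_⟩
  have hbdd : BddAbove (Set.range fun n => xi R n M) := ⟨mu R M, by
    rintro _ ⟨n, rfl⟩; exact hxibound n⟩
  obtain ⟨m0, hm0⟩ := Nat.sSup_mem (Set.range_nonempty (fun n => xi R n M)) hbdd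
  have hconst : ∀ l : ℕ, m0 ≤ l → xi R l M = xi R m0 M := by
    intro l hl
    refine le_antisymm ?_ (hximono m0 l hl)
    calc xi R l M ≤ sSup (Set.range fun n => xi R n M) := le_csSup hbdd ⟨l, rfl⟩
    _ = xi R m0 M := hm0.symm
  have hspaneq : ∀ l : ℕ, m0 ≤ l →
      Submodule.span k {f : M →ₗ[R] k | SyzFactors R m0 f} =
      Submodule.span k {f : M →ₗ[R] k | SyzFactors R l f} := by
    intro l hl
    exact Submodule.eq_of_le_of_finrank_eq (hspan hl) (hconst l hl).symm
  have huni : Submodule.span k {f : M →ₗ[R] k | ∃ j : ℕ, SyzFactors R j f} =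
      Submodule.span k {f : M →ₗ[R] k | SyzFactors R m0 f} := by
    refine le_antisymm ?_ (Submodule.span_mono (fun f hf => ⟨m0, hf⟩))
    rw [Submodule.span_le]
    rintro f ⟨j, hj⟩
    have h1 : f ∈ Submodule.span k {f : M →ₗ[R] k | SyzFactors R j f} :=
      Submodule.subset_span hj
    have h2 : f ∈ Submodule.span k {f : M →ₗ[R] k | SyzFactors R (max j m0) f} :=
      hspan (le_max_left j m0) h1
    rw [← hspaneq (max j m0) (le_max_right j m0)] at h2
    exact h2
  exact ⟨m0, fun l hl => by rw [hconst l hl]; unfold xi; rw [huni]⟩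
end
end

section
/- Let R be a commutative noetherian local ring with residue field k, M a finitely generated R-module, n ≥ 0, and suppose that every R-linear map f : M → k whose n-th syzygy Ω^n f factors through a projective module is zero (i.e., ξ(n,M) = 0). Then for every finitely generated R-module Z of projective dimension at most n and every R-linear map f : M → Z, the induced map f ⊗_R k : M ⊗ k → Z ⊗ k is zero. -/
noncomputable section

section Key

variable (R : Type) [CommRing R] [IsNoetherianRing R]

lemma finiteKer {a : ℕ} {P : Type} [AddCommGroup P] [Module R P] [Module.Finite R P]
    (p : (Fin a → R) →ₗ[R] P) : Module.Finite R (LinearMap.ker p) :=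
  Module.Finite.iff_fg.mpr (IsNoetherian.noetherian _)

lemma key : ∀ (n : ℕ) (M K N : Type) [AddCommGroup M] [Module R M] [Module.Finite R M]
    [AddCommGroup K] [Module R K] [Module.Finite R K]
    [AddCommGroup N] [Module R N] [Module.Finite R N],
    projDimLE R n K → ∀ (u : M →ₗ[R] K) (v : K →ₗ[R] N), SyzFactors R n (v ∘ₗ u) := by
  intro n
  induction n with
  | zero =>
    intro M K N _ _ _ _ _ _ _ _ _ hK u v
    have hK' : Module.Projective R K := hK
    obtain ⟨b, p, hp⟩ := Module.Finite.exists_fin' R K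
    obtain ⟨s, hs⟩ := Module.projective_lifting_property p LinearMap.id hp
    refine ⟨b, v ∘ₗ p, s ∘ₗ u, ?_⟩
    ext x
    have := LinearMap.congr_fun hs (u x)
    simp only [LinearMap.comp_apply, LinearMap.id_apply] at this ⊢
    rw [this]
  | succ n ih =>
    intro M K N _ _ _ _ _ _ _ _ _ hK u v
    obtain ⟨b, p, hp, hker⟩ := hK
    obtain ⟨a, p', hp'⟩ := Module.Finite.exists_fin' R M
    obtain ⟨c, q, hq⟩ := Module.Finite.exists_fin' R N
    obtain ⟨ψ, hψ⟩ := Module.projective_lifting_property p (u ∘ₗ p') hp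
    obtain ⟨θ, hθ⟩ := Module.projective_lifting_property q (v ∘ₗ p) hq
    have hcomm : q ∘ₗ (θ ∘ₗ ψ) = (v ∘ₗ u) ∘ₗ p' := by
      rw [← LinearMap.comp_assoc, hθ, LinearMap.comp_assoc, hψ, ← LinearMap.comp_assoc]
    refine ⟨a, c, p', q, θ ∘ₗ ψ, hp', hq, hcomm, ?_⟩
    have hψ' : ∀ x ∈ LinearMap.ker p', ψ x ∈ LinearMap.ker p := by
      intro x hx
      have h1 : p (ψ x) = u (p' x) := LinearMap.congr_fun hψ x
      rw [LinearMap.mem_ker] at hx ⊢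
      rw [h1, hx, map_zero]
    have hθ' : ∀ x ∈ LinearMap.ker p, θ x ∈ LinearMap.ker q := by
      intro x hx
      have h1 : q (θ x) = v (p x) := LinearMap.congr_fun hθ x
      rw [LinearMap.mem_ker] at hx ⊢
      rw [h1, hx, map_zero]
    have heq : ((θ ∘ₗ ψ).restrict (p := LinearMap.ker p') (q := LinearMap.ker q)
          (fun x hx => by
            have h1 : q ((θ ∘ₗ ψ) x) = (v ∘ₗ u) (p' x) := LinearMap.congr_fun hcomm x
            rw [LinearMap.mem_ker] at hx ⊢
            rw [h1, hx, map_zero])) =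
        (θ.restrict (p := LinearMap.ker p) (q := LinearMap.ker q) hθ') ∘ₗ
        (ψ.restrict (p := LinearMap.ker p') (q := LinearMap.ker p) hψ') := by
      ext x
      rfl
    rw [heq]
    haveI := finiteKer R p'
    haveI := finiteKer R p
    haveI := finiteKer R q
    exact ih _ _ _ hker _ _

end Key

/-- If every linear map `f : M → k` whose `n`-th syzygy factors through a projective is
zero (i.e. `ξ(n,M) = 0`), then for every finitely generated module `Z` of projective
dimension at most `n` and every `f : M → Z`, the induced map `f ⊗ k` is zero. -/

theorem stmt_15 (R : Type) [CommRing R] [IsNoetherianRing R] [IsLocalRing R]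
    (M : Type) [AddCommGroup M] [Module R M] [Module.Finite R M] (n : ℕ)
    (hxi : ∀ f : M →ₗ[R] IsLocalRing.ResidueField R, SyzFactors R n f → f = 0) :
    ∀ (Z : Type) [AddCommGroup Z] [Module R Z] [Module.Finite R Z],
      projDimLE R n Z → ∀ f : M →ₗ[R] Z,
        LinearMap.rTensor (IsLocalRing.ResidueField R) f = 0 := by
  intro Z _ _ _ hZ f
  set k := IsLocalRing.ResidueField R
  set I := IsLocalRing.maximalIdeal R
  haveI : Module.Finite R k :=
    Module.Finite.of_surjective (Algebra.linearMap R k) Ideal.Quotient.mk_surjective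
  have hg : ∀ g : Z →ₗ[R] k, g ∘ₗ f = 0 := fun g => hxi (g ∘ₗ f) (key R n M Z k hZ f g)
  have h0 : ∀ m : M, f m ∈ I • (⊤ : Submodule R Z) := by
    intro m
    by_contra hm
    set Q := Z ⧸ (I • (⊤ : Submodule R Z))
    letI : Field (R ⧸ I) := Ideal.Quotient.field I
    have hz : (Submodule.Quotient.mk (f m) : Q) ≠ 0 := by
      rwa [ne_eq, Submodule.Quotient.mk_eq_zero]
    have : ¬ ∀ φ : Module.Dual (R ⧸ I) Q, φ (Submodule.Quotient.mk (f m)) = 0 := by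
      rw [Module.forall_dual_apply_eq_zero_iff]
      exact hz
    obtain ⟨φ, hφ⟩ := not_forall.mp this
    have hsmul : ∀ (r : R) (x : Q), φ (r • x) = r • φ x := by
      intro r x
      have h1 : r • x = (Ideal.Quotient.mk I r) • x := rfl
      rw [h1, map_smul]
      rfl
    let g : Z →ₗ[R] k :=
      { toFun := fun z => φ (Submodule.Quotient.mk z)
        map_add' := fun x y => by
          show φ (Submodule.Quotient.mk (x + y)) = _
          rw [Submodule.Quotient.mk_add, map_add]
          rfl
        map_smul' := fun r z => by
          show φ (Submodule.Quotient.mk (r • z)) = _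
          rw [Submodule.Quotient.mk_smul, hsmul]
          rfl }
    have := LinearMap.congr_fun (hg g) m
    exact hφ this
  have key2 : ∀ (z : Z), z ∈ I • (⊤ : Submodule R Z) → ∀ c : k, z ⊗ₜ[R] c = 0 := by
    intro z hz c
    refine Submodule.smul_induction_on hz ?_ ?_
    · intro r hr x _
      rw [TensorProduct.smul_tmul]
      have : r • c = 0 := by
        rw [Algebra.smul_def]
        have : algebraMap R k r = 0 := Ideal.Quotient.eq_zero_iff_mem.mpr hr
        rw [this, zero_mul]
      rw [this, TensorProduct.tmul_zero]
    · intro x y hx hy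
      rw [TensorProduct.add_tmul, hx, hy, add_zero]
  apply TensorProduct.ext'
  intro m c
  rw [LinearMap.rTensor_tmul, LinearMap.zero_apply]
  exact key2 (f m) (h0 m) c
end
end
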